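/- Filtering recursion for a hidden Markov model with rank observations: if z_t | z_{t−1} ~ N_N(f(z_{t−1}), I_N) with f a step function taking value μ̃_k on cell C_k of a finite partition {C_k} of ℝ (applied coordinatewise), and the observation is τ_t = rank(z_t), then the filtering density satisfies p(z_t | τ_{1:t}) ∝ 𝟙(z_t ∈ A_t) Σ_k N_N(z_t | μ̃_k, I_N) q_{k,t}, where the k-sum is over multi-indices k ∈ {1,...,K}^N, μ̃_k = (μ̃_{k_1},...,μ̃_{k_N}), A_t is the order cone of τ_t, and q_{k,t} = Σ_m q_{m,t−1} ∫_{C_k ∩ A_{t−1}} N_N(z | μ̃_m, I_N) dz with C_k = C_{k_1} × ... × C_{k_N}. -/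
import Mathlib


open Set MeasureTheory

/-- The N-dimensional Gaussian density with mean μ and identity covariance. -/
noncomputable def gaussPdf (N : ℕ) (μ z : Fin N → ℝ) : ℝ :=
  (2 * Real.pi) ^ (-(N : ℝ) / 2) * Real.exp (-(∑ i, (z i - μ i) ^ 2) / 2)

/-- The order cone of a permutation τ. -/
def orderCone (N : ℕ) (τ : Equiv.Perm (Fin N)) : Set (Fin N → ℝ) :=
  {z | ∀ i j, z i < z j ↔ τ i < τ j}

/-- Product cell C_k = C_{k_1} × ... × C_{k_N} of a multi-index k. -/
def cellProd (N K : ℕ) (C : Fin K → Set ℝ) (k : Fin N → Fin K) : Set (Fin N → ℝ) :=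
  {z | ∀ i, z i ∈ C (k i)}

lemma gaussPdf_eq_prod (N : ℕ) (μ z : Fin N → ℝ) :
    gaussPdf N μ z = ∏ i, ((2 * Real.pi) ^ (-(1:ℝ)/2) * Real.exp (-(z i - μ i)^2/2)) := by
  unfold gaussPdf
  rw [Finset.prod_mul_distrib, Finset.prod_const, Finset.card_univ, Fintype.card_fin,
    ← Real.rpow_natCast ((2 * Real.pi) ^ (-(1:ℝ)/2)) N,
    ← Real.rpow_mul (by positivity), ← Real.exp_sum]
  congr 1
  · congr 1; ring
  · rw [neg_div, Finset.sum_div, ← Finset.sum_neg_distrib]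
    exact congrArg Real.exp (Finset.sum_congr rfl fun x _ => by ring)

lemma gauss1_integrable (m : ℝ) :
    Integrable (fun x : ℝ => (2 * Real.pi) ^ (-(1:ℝ)/2) * Real.exp (-(x - m)^2/2)) := by
  apply Integrable.const_mul
  have h : Integrable (fun x : ℝ => Real.exp (-(1/2 : ℝ) * x ^ 2)) :=
    integrable_exp_neg_mul_sq (by norm_num)
  have h2 := h.comp_sub_right m
  apply h2.congr
  filter_upwards with x
  congr 1
  ring

lemma gauss_integrable (N : ℕ) (μ : Fin N → ℝ) : Integrable (gaussPdf N μ) := by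
  have h : Integrable (fun z : Fin N → ℝ =>
      ∏ i, ((2*Real.pi)^(-(1:ℝ)/2) * Real.exp (-(z i - μ i)^2/2))) :=
    Integrable.fintype_prod (fun i => gauss1_integrable (μ i))
  apply h.congr
  filter_upwards with z
  exact (gaussPdf_eq_prod N μ z).symm

lemma meas_orderCone (N : ℕ) (τ : Equiv.Perm (Fin N)) : MeasurableSet (orderCone N τ) := by
  have : orderCone N τ = ⋂ i, ⋂ j, {z : Fin N → ℝ | z i < z j ↔ τ i < τ j} := by
    ext z; simp [orderCone]
  rw [this]
  refine MeasurableSet.iInter fun i => MeasurableSet.iInter fun j => ?_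
  by_cases h : τ i < τ j
  · have : {z : Fin N → ℝ | z i < z j ↔ τ i < τ j} = {z | z i < z j} := by
      ext z; simp [h]
    rw [this]; exact measurableSet_lt (measurable_pi_apply i) (measurable_pi_apply j)
  · have : {z : Fin N → ℝ | z i < z j ↔ τ i < τ j} = {z | z i < z j}ᶜ := by
      ext z; simp [h]
    rw [this]
    exact (measurableSet_lt (measurable_pi_apply i) (measurable_pi_apply j)).compl

lemma meas_cellProd (N K : ℕ) (C : Fin K → Set ℝ) (hC : ∀ k, MeasurableSet (C k))
    (k : Fin N → Fin K) : MeasurableSet (cellProd N K C k) := by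
  have : cellProd N K C k = ⋂ i, (fun z : Fin N → ℝ => z i) ⁻¹' C (k i) := by
    ext z; simp [cellProd]
  rw [this]
  exact MeasurableSet.iInter fun i => (measurable_pi_apply i) (hC (k i))

/-- filtering recursion for the HMM with rank observations.
The latent state evolves as z_t | z_{t-1} ~ N(f(z_{t-1}), I_N) with f a
coordinatewise step function on the partition {C_k} with values μ̃_k, the
observation is the rank of z_t (i.e. z_t lies in the order cone A_t), and the
(unnormalized) filtering density α_t satisfies the forward recursion.  Then
α_t, hence the filtering density p(z_t | τ_{1:t}), is proportional to
𝟙(z ∈ A_t) Σ_k N(z | μ̃_k, I_N) q_{k,t} with the stated weight recursion. -/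
theorem stmt_11 (N K : ℕ) (hN : 0 < N) (hK : 0 < K)
    (C : Fin K → Set ℝ)
    (hCmeas : ∀ k, MeasurableSet (C k))
    (hCdisj : ∀ k k' : Fin K, k ≠ k' → Disjoint (C k) (C k'))
    (hCcover : (⋃ k, C k) = Set.univ)
    (μt : Fin K → ℝ)
    (f : (Fin N → ℝ) → (Fin N → ℝ))
    (hf : ∀ (z : Fin N → ℝ) (i : Fin N) (k : Fin K), z i ∈ C k → f z i = μt k)
    (τ : ℕ → Equiv.Perm (Fin N))
    (A : ℕ → Set (Fin N → ℝ))
    (hA : ∀ t, A t = orderCone N (τ t))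
    (zprior : Fin N → ℝ)
    (α : ℕ → (Fin N → ℝ) → ℝ)
    (q : ℕ → (Fin N → Fin K) → ℝ)
    (hα1 : ∀ z, α 1 z =
      (A 1).indicator (fun z => ∫ z0, gaussPdf N (f z0) z * gaussPdf N zprior z0) z)
    (hαs : ∀ t, 1 ≤ t → ∀ z, α (t + 1) z =
      (A (t + 1)).indicator (fun z => ∫ z', gaussPdf N (f z') z * α t z') z)
    (hq1 : ∀ k, q 1 k = ∫ z0 in cellProd N K C k, gaussPdf N zprior z0)
    (hqs : ∀ t, 1 ≤ t → ∀ k, q (t + 1) k =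
      ∑ m : Fin N → Fin K, q t m *
        ∫ z in (cellProd N K C k ∩ A t), gaussPdf N (fun i => μt (m i)) z) :
    ∀ t, 1 ≤ t → ∃ c > 0, ∀ z, α t z =
      c * (A t).indicator
        (fun z => ∑ k : Fin N → Fin K, gaussPdf N (fun i => μt (k i)) z * q t k) z := by
  classical
  have hgi : ∀ μ0 : Fin N → ℝ, Integrable (gaussPdf N μ0) := gauss_integrable N
  have hmcell : ∀ k, MeasurableSet (cellProd N K C k) := meas_cellProd N K C hCmeas
  have hmA : ∀ t, MeasurableSet (A t) := fun t => (hA t) ▸ meas_orderCone N (τ t)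
  have hex : ∀ z0 : Fin N → ℝ, ∃ k, z0 ∈ cellProd N K C k := by
    intro z0
    have h : ∀ i, ∃ k, z0 i ∈ C k := by
      intro i
      have : z0 i ∈ ⋃ k, C k := hCcover.symm ▸ Set.mem_univ (z0 i)
      simpa using this
    choose k hk using h
    exact ⟨k, hk⟩
  have huniq : ∀ (z0 : Fin N → ℝ) (k k' : Fin N → Fin K),
      z0 ∈ cellProd N K C k → z0 ∈ cellProd N K C k' → k = k' := by
    intro z0 k k' h1 h2
    funext i
    by_contra hne
    exact Set.disjoint_left.mp (hCdisj _ _ hne) (h1 i) (h2 i)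
  have hfcell : ∀ (k : Fin N → Fin K) (z0 : Fin N → ℝ), z0 ∈ cellProd N K C k →
      f z0 = fun i => μt (k i) := fun k z0 h => funext fun i => hf z0 i (k i) (h i)
  have hdecomp : ∀ (F : (Fin N → ℝ) → ℝ) (G : (Fin N → Fin K) → (Fin N → ℝ) → ℝ),
      (∀ (k : Fin N → Fin K) (z0 : Fin N → ℝ), z0 ∈ cellProd N K C k → F z0 = G k z0) →
      ∀ z0, F z0 = ∑ k : Fin N → Fin K, (cellProd N K C k).indicator (G k) z0 := by
    intro F G hFG z0
    obtain ⟨k0, hk0⟩ := hex z0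
    rw [Finset.sum_eq_single k0]
    · rw [Set.indicator_of_mem hk0, hFG k0 z0 hk0]
    · intro k _ hne
      exact Set.indicator_of_notMem (fun hmem => hne (huniq z0 k k0 hmem hk0)) _
    · intro h; exact absurd (Finset.mem_univ k0) h
  suffices h : ∀ t, 1 ≤ t → ∀ z, α t z =
      (A t).indicator
        (fun z => ∑ k : Fin N → Fin K, gaussPdf N (fun i => μt (k i)) z * q t k) z by
    intro t ht
    exact ⟨1, one_pos, fun z => by rw [h t ht z, one_mul]⟩
  intro t ht
  induction t, ht using Nat.le_induction with
  | base =>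
    intro z
    rw [hα1 z]
    congr 1
    funext z'
    have hpt : ∀ z0, gaussPdf N (f z0) z' * gaussPdf N zprior z0 =
        ∑ k : Fin N → Fin K, (cellProd N K C k).indicator
          (fun z0 => gaussPdf N (fun i => μt (k i)) z' * gaussPdf N zprior z0) z0 :=
      hdecomp _ _ (fun k z0 hz0 => by rw [hfcell k z0 hz0])
    simp_rw [hpt]
    rw [integral_finset_sum _ (fun k _ => ((hgi zprior).const_mul _).indicator (hmcell k))]
    refine Finset.sum_congr rfl fun k _ => ?_
    rw [integral_indicator (hmcell k), integral_const_mul, hq1 k]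
  | succ t ht ih =>
    intro z
    rw [hαs t ht z]
    congr 1
    funext z'
    set S : (Fin N → ℝ) → ℝ :=
      fun w => ∑ m : Fin N → Fin K, gaussPdf N (fun i => μt (m i)) w * q t m with hS
    have hSint : Integrable S :=
      integrable_finset_sum _ (fun m _ => (hgi _).mul_const _)
    have hpt : ∀ w, gaussPdf N (f w) z' * α t w =
        ∑ k : Fin N → Fin K, (cellProd N K C k ∩ A t).indicator
          (fun w => gaussPdf N (fun i => μt (k i)) z' * S w) w := by
      intro w
      have h1 : ∀ (k : Fin N → Fin K) (w : Fin N → ℝ), w ∈ cellProd N K C k →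
          gaussPdf N (f w) z' * α t w =
          (A t).indicator (fun w => gaussPdf N (fun i => μt (k i)) z' * S w) w := by
        intro k w hw
        rw [ih w]
        by_cases hwA : w ∈ A t
        · rw [Set.indicator_of_mem hwA, Set.indicator_of_mem hwA, hfcell k w hw]
        · rw [Set.indicator_of_notMem hwA, Set.indicator_of_notMem hwA, mul_zero]
      rw [hdecomp _ _ h1 w]
      exact Finset.sum_congr rfl fun k _ => by rw [Set.indicator_indicator]
    simp_rw [hpt]
    rw [integral_finset_sum _
      (fun k _ => (hSint.const_mul _).indicator ((hmcell k).inter (hmA t)))]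
    refine Finset.sum_congr rfl fun k _ => ?_
    rw [integral_indicator ((hmcell k).inter (hmA t)), integral_const_mul]
    congr 1
    rw [hqs t ht k, hS]
    rw [integral_finset_sum _ (fun m _ => ((hgi _).mul_const _).integrableOn)]
    exact Finset.sum_congr rfl fun m _ => by rw [integral_mul_const, mul_comm]
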